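/- arXiv:1707.04624 — 3 statements merged into one kernel-verified Lean document; each statement's English description precedes it below -/
import Mathlib

section
/- Let (G,n) be a loopless finite connected graph with chain structure, and let w be an admissible multidegree on (G,n). Then the composition of the twists at all vertices of G (each performed once, in any order) returns w to itself. Consequently, the twist at a vertex v is invertible, with inverse given by the composition of the twists at all vertices other than v. -/
open Finset

/-- An admissible multidegree on a graph with vertex set `V`, edge set `E` and
chain structure `n`. -/
structure AdmDeg (V E : Type*) (n : E → ℕ) where
  wG : V → ℤ
  mu : (e : E) → ZMod (n e)

variable {V E : Type*} [Fintype V] [Fintype E] [DecidableEq V] [DecidableEq E]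

/-- The total degree of an admissible multidegree. -/
def AdmDeg.degree (n : E → ℕ) (w : AdmDeg V E n) : ℤ :=
  ((univ.filter fun e => w.mu e ≠ 0).card : ℤ) + ∑ v, w.wG v

/-- The twist of an admissible multidegree at a vertex `v` (the graph is oriented by
`tail`/`head`, and `σ(e,v) = 1` if `v` is the tail of `e`, `-1` if it is the head).
For each edge `e` incident to `v`: if `μ(e) + σ(e,v) = 0` the other endpoint gains a chip;
if `μ(e) = 0` then `v` loses a chip; and `μ(e)` is replaced by `μ(e) + σ(e,v)`. -/
def twist (tail head : E → V) (n : E → ℕ) (v : V) (w : AdmDeg V E n) : AdmDeg V E n where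
  wG := fun u => w.wG u
    + ((univ.filter fun e => tail e = v ∧ head e = u ∧ w.mu e + 1 = 0).card : ℤ)
    + ((univ.filter fun e => head e = v ∧ tail e = u ∧ w.mu e - 1 = 0).card : ℤ)
    - (if u = v then
        ((univ.filter fun e => (tail e = v ∨ head e = v) ∧ w.mu e = 0).card : ℤ) else 0)
  mu := fun e =>
    if tail e = v then w.mu e + 1 else if head e = v then w.mu e - 1 else w.mu e

/-- The adjacency relation of the (multi)graph given by `tail` and `head`. -/
def GraphAdj (tail head : E → V) (u u' : V) : Prop :=
  ∃ e, (tail e = u ∧ head e = u') ∨ (tail e = u' ∧ head e = u)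

set_option maxHeartbeats 4000000 in
set_option maxRecDepth 4000 in
/-- Auxiliary per-edge identity used in the proof of `twistSet_insert`. -/
lemma per_edge {V M : Type*} [DecidableEq V] [AddGroupWithOne M] [DecidableEq M]
    (S : Finset V) (a b u v : V) (μ : M) (hab : a ≠ b) (hv : v ∉ S) :
    ((((if (a = v ∨ a ∈ S) ∧ ¬(b = v ∨ b ∈ S) ∧ b = u ∧ μ + 1 = 0 then (1:ℤ) else 0) +
          if (b = v ∨ b ∈ S) ∧ ¬(a = v ∨ a ∈ S) ∧ a = u ∧ μ - 1 = 0 then 1 else 0) -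
        if a = u ∧ (u = v ∨ u ∈ S) ∧ ¬(b = v ∨ b ∈ S) ∧ μ = 0 then 1 else 0) -
      if b = u ∧ (u = v ∨ u ∈ S) ∧ ¬(a = v ∨ a ∈ S) ∧ μ = 0 then 1 else 0) =
    ((((((if a = v ∧ b = u ∧ μ + 1 = 0 then (1:ℤ) else 0) +
                if b = v ∧ a = u ∧ μ - 1 = 0 then 1 else 0) -
              if u = v ∧ (a = v ∨ b = v) ∧ μ = 0 then 1 else 0) +
            if a ∈ S ∧ b ∉ S ∧ b = u ∧
                (if a = v then μ + 1 else if b = v then μ - 1 else μ) + 1 = 0 then 1 else 0) +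
          if b ∈ S ∧ a ∉ S ∧ a = u ∧
              (if a = v then μ + 1 else if b = v then μ - 1 else μ) - 1 = 0 then 1 else 0) -
        if a = u ∧ u ∈ S ∧ b ∉ S ∧
            (if a = v then μ + 1 else if b = v then μ - 1 else μ) = 0 then 1 else 0) -
      if b = u ∧ u ∈ S ∧ a ∉ S ∧
          (if a = v then μ + 1 else if b = v then μ - 1 else μ) = 0 then 1 else 0 := by
  have hb : ¬ b = a := fun h => hab h.symm
  by_cases h1 : a = v
  · subst h1
    rw [show (if a = a then μ + 1 else if b = a then μ - 1 else μ) = μ + 1 from if_pos rfl]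
    simp only [add_sub_cancel_right]
    by_cases h3 : a = u
    · subst h3
      by_cases h6 : b ∈ S <;> by_cases h7 : μ = 0 <;> by_cases h8 : μ + 1 = 0 <;>
        by_cases h9 : μ - 1 = 0 <;> simp_all
    · have h3' : ¬u = a := fun h => h3 h.symm
      by_cases h4 : b = u
      · subst h4
        by_cases h6 : b ∈ S <;> by_cases h7 : μ = 0 <;> by_cases h8 : μ + 1 = 0 <;>
          by_cases h9 : μ - 1 = 0 <;> simp_all
      · have h4' : ¬u = b := fun h => h4 h.symm
        by_cases h10 : u ∈ S <;> by_cases h6 : b ∈ S <;> by_cases h7 : μ = 0 <;>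
          by_cases h8 : μ + 1 = 0 <;> by_cases h9 : μ - 1 = 0 <;> simp_all
  · by_cases h2 : b = v
    · subst h2
      rw [show (if a = b then μ + 1 else if b = b then μ - 1 else μ) = μ - 1 from by
        rw [if_neg h1, if_pos rfl]]
      simp only [sub_add_cancel]
      by_cases h3 : a = u
      · subst h3
        by_cases h5 : a ∈ S <;> by_cases h7 : μ = 0 <;> by_cases h8 : μ + 1 = 0 <;>
          by_cases h9 : μ - 1 = 0 <;> simp_all
      · have h3' : ¬u = a := fun h => h3 h.symm
        by_cases h4 : b = u
        · subst h4
          by_cases h5 : a ∈ S <;> by_cases h7 : μ = 0 <;> by_cases h8 : μ + 1 = 0 <;>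
            by_cases h9 : μ - 1 = 0 <;> simp_all
        · have h4' : ¬u = b := fun h => h4 h.symm
          by_cases h10 : u ∈ S <;> by_cases h5 : a ∈ S <;> by_cases h7 : μ = 0 <;>
            by_cases h8 : μ + 1 = 0 <;> by_cases h9 : μ - 1 = 0 <;> simp_all
    · rw [show (if a = v then μ + 1 else if b = v then μ - 1 else μ) = μ from by
        rw [if_neg h1, if_neg h2]]
      have h1' : ¬v = a := fun h => h1 h.symm
      have h2' : ¬v = b := fun h => h2 h.symm
      by_cases huv : u = v
      · subst huv
        by_cases h3 : a = u
        · subst h3; simp_all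
        · by_cases h4 : b = u
          · subst h4; simp_all
          · have h3' : ¬u = a := fun h => h3 h.symm
            have h4' : ¬u = b := fun h => h4 h.symm
            by_cases h5 : a ∈ S <;> by_cases h6 : b ∈ S <;> by_cases h7 : μ = 0 <;>
              by_cases h8 : μ + 1 = 0 <;> by_cases h9 : μ - 1 = 0 <;> simp_all
      · have huv' : ¬v = u := fun h => huv h.symm
        by_cases h3 : a = u
        · subst h3
          by_cases h10 : a ∈ S <;> by_cases h6 : b ∈ S <;> by_cases h7 : μ = 0 <;>
            by_cases h8 : μ + 1 = 0 <;> by_cases h9 : μ - 1 = 0 <;> simp_all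
        · have h3' : ¬u = a := fun h => h3 h.symm
          by_cases h4 : b = u
          · subst h4
            by_cases h5 : a ∈ S <;> by_cases h10 : b ∈ S <;> by_cases h7 : μ = 0 <;>
              by_cases h8 : μ + 1 = 0 <;> by_cases h9 : μ - 1 = 0 <;> simp_all
          · have h4' : ¬u = b := fun h => h4 h.symm
            by_cases h5 : a ∈ S <;> by_cases h6 : b ∈ S <;> by_cases h10 : u ∈ S <;>
              by_cases h7 : μ = 0 <;> by_cases h8 : μ + 1 = 0 <;>
              by_cases h9 : μ - 1 = 0 <;> simp_all

set_option linter.unusedSectionVars false in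
theorem AdmDeg.ext' {n : E → ℕ} {w w' : AdmDeg V E n} (h1 : w.wG = w'.wG)
    (h2 : w.mu = w'.mu) : w = w' := by
  cases w; cases w'; simp_all

/-- The result of twisting simultaneously at all vertices of a finite set `S`. -/
def twistSet (tail head : E → V) (n : E → ℕ) (S : Finset V) (w : AdmDeg V E n) :
    AdmDeg V E n where
  wG := fun u => w.wG u
    + ((univ.filter fun e => tail e ∈ S ∧ head e ∉ S ∧ head e = u ∧ w.mu e + 1 = 0).card : ℤ)
    + ((univ.filter fun e => head e ∈ S ∧ tail e ∉ S ∧ tail e = u ∧ w.mu e - 1 = 0).card : ℤ)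
    - ((univ.filter fun e => tail e = u ∧ u ∈ S ∧ head e ∉ S ∧ w.mu e = 0).card : ℤ)
    - ((univ.filter fun e => head e = u ∧ u ∈ S ∧ tail e ∉ S ∧ w.mu e = 0).card : ℤ)
  mu := fun e => w.mu e + (if tail e ∈ S then 1 else 0) - (if head e ∈ S then 1 else 0)

set_option linter.unusedSectionVars false in
lemma card_filter_int (p : E → Prop) [DecidablePred p] :
    ((univ.filter p).card : ℤ) = ∑ e, if p e then (1:ℤ) else 0 := by
  rw [Finset.card_filter]; push_cast; rfl

set_option linter.unusedSectionVars false in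
lemma ite_card (P : Prop) [Decidable P] (p : E → Prop) [DecidablePred p] :
    (if P then ((univ.filter p).card : ℤ) else 0)
      = ((univ.filter fun e => P ∧ p e).card : ℤ) := by
  by_cases h : P <;> simp [h]

set_option linter.unusedSectionVars false in
lemma sum_comb (c : ℤ) (f1 f2 f3 f4 g1 g2 g3 g4 g5 g6 g7 : E → ℤ)
    (h : ∀ e, f1 e + f2 e - f3 e - f4 e
      = g1 e + g2 e - g3 e + g4 e + g5 e - g6 e - g7 e) :
    c + (∑ e, f1 e) + (∑ e, f2 e) - (∑ e, f3 e) - (∑ e, f4 e)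
    = c + (∑ e, g1 e) + (∑ e, g2 e) - (∑ e, g3 e) + (∑ e, g4 e) + (∑ e, g5 e)
      - (∑ e, g6 e) - (∑ e, g7 e) := by
  have h2 := Finset.sum_congr rfl (fun e (_ : e ∈ (univ : Finset E)) => h e)
  simp only [Finset.sum_add_distrib, Finset.sum_sub_distrib] at h2
  linarith

set_option linter.unusedSectionVars false in
lemma twistSet_insert (tail head : E → V) (hloopless : ∀ e, tail e ≠ head e)
    (n : E → ℕ) (v : V) (S : Finset V) (hv : v ∉ S) (w : AdmDeg V E n) :
    twistSet tail head n (insert v S) w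
      = twistSet tail head n S (twist tail head n v w) := by
  apply AdmDeg.ext'
  · funext u
    simp only [twistSet, twist]
    rw [ite_card]
    simp only [card_filter_int]
    erw [card_filter_int, card_filter_int, card_filter_int, card_filter_int]
    apply sum_comb
    intro e
    simp only [mem_insert]
    exact per_edge S (tail e) (head e) u v (w.mu e) (hloopless e) hv
  · funext e
    simp only [twistSet, twist, mem_insert]
    have hl := hloopless e
    by_cases h1 : tail e = v <;> by_cases h2 : head e = v <;>
      simp_all [fun h : tail e = v => h ▸ hv, fun h : head e = v => h ▸ hv] <;> ring

set_option linter.unusedSectionVars false in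
lemma twistSet_empty (tail head : E → V) (n : E → ℕ) (w : AdmDeg V E n) :
    twistSet tail head n ∅ w = w := by
  apply AdmDeg.ext' <;> funext x <;> simp [twistSet]

set_option linter.unusedSectionVars false in
lemma twistSet_univ (tail head : E → V) (n : E → ℕ) (w : AdmDeg V E n) :
    twistSet tail head n univ w = w := by
  apply AdmDeg.ext' <;> funext x <;> simp [twistSet]

set_option linter.unusedSectionVars false in
lemma foldl_eq_twistSet (tail head : E → V) (hloopless : ∀ e, tail e ≠ head e)
    (n : E → ℕ) :
    ∀ (l : List V), l.Nodup → ∀ (w : AdmDeg V E n),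
      l.foldl (fun a u => twist tail head n u a) w = twistSet tail head n l.toFinset w
  | [], _, w => by simp [twistSet_empty]
  | v :: t, hnd, w => by
    have hvt : v ∉ t := (List.nodup_cons.mp hnd).1
    have hndt : t.Nodup := (List.nodup_cons.mp hnd).2
    have hv : v ∉ t.toFinset := fun h => hvt (List.mem_toFinset.mp h)
    calc (v :: t).foldl (fun a u => twist tail head n u a) w
        = t.foldl (fun a u => twist tail head n u a) (twist tail head n v w) := rfl
      _ = twistSet tail head n t.toFinset (twist tail head n v w) :=
          foldl_eq_twistSet tail head hloopless n t hndt _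
      _ = twistSet tail head n (insert v t.toFinset) w :=
          (twistSet_insert tail head hloopless n v t.toFinset hv w).symm
      _ = twistSet tail head n (v :: t).toFinset w := by rw [List.toFinset_cons]

/-- on a loopless finite connected graph with chain structure, the
composition of the twists at all vertices (each performed once, in any order) is the
identity on admissible multidegrees.  Consequently the twist at a vertex `v` is
invertible, its inverse being the composition of the twists at all other vertices. -/
theorem foldl_twist_univ (tail head : E → V) (hloopless : ∀ e, tail e ≠ head e)
    (hconn : ∀ u u' : V, Relation.ReflTransGen (GraphAdj tail head) u u')
    (n : E → ℕ) (hn : ∀ e, 0 < n e) (w : AdmDeg V E n) :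
    (∀ l : List V, l.Nodup → (∀ v, v ∈ l) →
      l.foldl (fun a u => twist tail head n u a) w = w) ∧
    (∀ (v : V) (l : List V), l.Nodup → (∀ u, u ∈ l ↔ u ≠ v) →
      l.foldl (fun a u => twist tail head n u a) (twist tail head n v w) = w) := by
  have main : ∀ (l : List V), l.Nodup → (∀ v, v ∈ l) → ∀ w : AdmDeg V E n,
      l.foldl (fun a u => twist tail head n u a) w = w := by
    intro l hnd hmem w
    rw [foldl_eq_twistSet tail head hloopless n l hnd w]
    have : l.toFinset = univ := by
      apply Finset.eq_univ_of_forall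
      intro v; exact List.mem_toFinset.mpr (hmem v)
    rw [this, twistSet_univ]
  refine ⟨fun l hnd hmem => main l hnd hmem w, ?_⟩
  intro v l hnd hmem
  have hvl : v ∉ l := fun h => (hmem v).mp h rfl
  have hnd' : (v :: l).Nodup := List.nodup_cons.mpr ⟨hvl, hnd⟩
  have hmem' : ∀ u, u ∈ v :: l := by
    intro u
    by_cases h : u = v
    · simp [h]
    · exact List.mem_cons_of_mem _ ((hmem u).mpr h)
  exact main (v :: l) hnd' hmem' w
end

section
/- Let G be a multitree with chain structure n, let (w_v)_{v ∈ V(G)} be a tight tuple of admissible multidegrees in the twist-orbit of an admissible multidegree w_0, and let e be an edge of Ḡ with endpoints v, v'. Let D_i^{e,v} (i ≥ 0) be the twisting divisors associated to (w_v)_v on the component Z_v, and b = b_{v,v'} the number of twists at (e,v') taking w_{v'} to w_v. Then for each 0 ≤ i ≤ b, if D_{i+1}^{e,v} - D_i^{e,v} = Σ_{e' ∈ I} P_{e'}^v for a set I of edges of G over e, then D_{b-i+1}^{e,v'} - D_{b-i}^{e,v'} = Σ_{e' ∈ I} P_{e'}^{v'}. In particular deg(D_{i+1}^{e,v} - D_i^{e,v})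 = deg(D_{b-i+1}^{e,v'} - D_{b-i}^{e,v'}), and an index j is critical for D_•^{e,v} if and only if b - j is critical for D_•^{e,v'}. -/
open Finset

variable {V E : Type*} [Fintype V] [Fintype E] [DecidableEq V] [DecidableEq E]

/-- The negative twist at `v`: the inverse of the twist at `v`. -/
def negTwist (tail head : E → V) (n : E → ℕ) (v : V) (w : AdmDeg V E n) : AdmDeg V E n where
  wG := fun u => w.wG u
    - ((univ.filter fun e =>
        ((tail e = v ∧ head e = u) ∨ (head e = v ∧ tail e = u)) ∧ w.mu e = 0).card : ℤ)
    + (if u = v then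
        ((univ.filter fun e =>
          (tail e = v ∧ w.mu e = 1) ∨ (head e = v ∧ w.mu e = -1)).card : ℤ) else 0)
  mu := fun e =>
    if tail e = v then w.mu e - 1 else if head e = v then w.mu e + 1 else w.mu e

/-- `w` is concentrated on `v`: there is an ordering of the vertices starting at `v`
such that each subsequent vertex has negative coefficient after performing the negative
twists at all previous vertices. -/
def Concentrated (tail head : E → V) (n : E → ℕ) (w : AdmDeg V E n) (v : V) : Prop :=
  ∃ l : List V, l.Nodup ∧ (∀ u, u ∈ l) ∧ l.head? = some v ∧
    ∀ (i : ℕ) (hi : i < l.length), 0 < i →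
      ((l.take i).foldl (fun a u => negTwist tail head n u a) w).wG (l.get ⟨i, hi⟩) < 0

/-- The simple graph `Ḡ` obtained from `G` by collapsing parallel edges. -/
def collapse (tail head : E → V) : SimpleGraph V :=
  SimpleGraph.fromRel fun u u' => ∃ e, tail e = u ∧ head e = u'

/-- The partial twist of `w` at `(e, a)` for a multitree, where `e` is the edge of `Ḡ`
joining `a` to `b`: the twist operations of the twist at `a` are performed only on the
edges of `G` lying over `e`, i.e. on the edges joining `a` and `b`. -/
def ptwist (tail head : E → V) (n : E → ℕ) (a b : V) (w : AdmDeg V E n) :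
    AdmDeg V E n where
  wG := fun u => w.wG u
    + (if u = b then
        ((univ.filter fun e =>
          (tail e = a ∧ head e = b ∧ w.mu e + 1 = 0) ∨
          (tail e = b ∧ head e = a ∧ w.mu e - 1 = 0)).card : ℤ) else 0)
    - (if u = a then
        ((univ.filter fun e =>
          ((tail e = a ∧ head e = b) ∨ (tail e = b ∧ head e = a)) ∧ w.mu e = 0).card : ℤ)
       else 0)
  mu := fun e =>
    if tail e = a ∧ head e = b then w.mu e + 1
    else if tail e = b ∧ head e = a then w.mu e - 1
    else w.mu e

/-- `σ(e,v)·μ(e)` as an element of `ℤ/n(e)ℤ`. -/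
def sigmaMu (tail : E → V) (n : E → ℕ) (w : AdmDeg V E n) (v : V) (e : E) :
    ZMod (n e) :=
  if tail e = v then w.mu e else -(w.mu e)

/-- The sequence of twisting divisors `D_i^{e,v}` associated to `w = w_v`, recorded as
multiplicity functions on the edges of `G` lying over the edge `e` of `Ḡ` joining
`v` and `v'`  (the value at `e'` is the coefficient of the marked point `P_{e'}^v`):
`D_0 = 0` and `D_{i+1} - D_i = Σ P_{e'}^v` over edges `e'` over `e` with
`σ(e',v)·μ_v(e') ≡ -i (mod n(e'))`. -/
def Dseq (tail head : E → V) (n : E → ℕ) (w : AdmDeg V E n) (v v' : V) :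
    ℕ → E → ℕ
  | 0 => fun _ => 0
  | (i + 1) => fun e =>
      Dseq tail head n w v v' i e +
        (if ((tail e = v ∧ head e = v') ∨ (tail e = v' ∧ head e = v)) ∧
            sigmaMu tail n w v e + (i : ZMod (n e)) = 0 then 1 else 0)

lemma ptwist_mu (tail head : E → V) (n : E → ℕ) (a c : V) (w : AdmDeg V E n) (e : E) :
    (ptwist tail head n a c w).mu e =
      if tail e = a ∧ head e = c then w.mu e + 1
      else if tail e = c ∧ head e = a then w.mu e - 1 else w.mu e := rfl

lemma ptwist_iter_mu (tail head : E → V) (n : E → ℕ) (a c : V) (w : AdmDeg V E n)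
    (k : ℕ) (e : E) :
    ((fun x => ptwist tail head n a c x)^[k] w).mu e =
      if tail e = a ∧ head e = c then w.mu e + k
      else if tail e = c ∧ head e = a then w.mu e - k else w.mu e := by
  induction k with
  | zero => simp
  | succ k ih =>
    rw [Function.iterate_succ_apply', ptwist_mu, ih]
    split_ifs <;> push_cast <;> ring

lemma key_iff (tail head : E → V) (n : E → ℕ)
    (v v' : V) (hvv' : v ≠ v') (w' : AdmDeg V E n) (b i : ℕ) (hi : i ≤ b) (e : E) :
    (((tail e = v ∧ head e = v') ∨ (tail e = v' ∧ head e = v)) ∧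
      sigmaMu tail n ((fun x => ptwist tail head n v' v x)^[b] w') v e
        + (i : ZMod (n e)) = 0)
    ↔ (((tail e = v' ∧ head e = v) ∨ (tail e = v ∧ head e = v')) ∧
      sigmaMu tail n w' v' e + ((b - i : ℕ) : ZMod (n e)) = 0) := by
  rw [Nat.cast_sub hi]
  by_cases h1 : tail e = v ∧ head e = v'
  · have htne : tail e ≠ v' := h1.1 ▸ hvv'
    have hmu : ((fun x => ptwist tail head n v' v x)^[b] w').mu e = w'.mu e - b := by
      rw [ptwist_iter_mu, if_neg (fun hc => htne hc.1), if_pos h1]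
    have hs1 : sigmaMu tail n ((fun x => ptwist tail head n v' v x)^[b] w') v e =
        w'.mu e - b := by rw [sigmaMu, if_pos h1.1, hmu]
    have hs2 : sigmaMu tail n w' v' e = -(w'.mu e) := by rw [sigmaMu, if_neg htne]
    constructor
    · rintro ⟨-, h⟩
      rw [hs1] at h
      exact ⟨Or.inr h1, by rw [hs2]; linear_combination -h⟩
    · rintro ⟨-, h⟩
      rw [hs2] at h
      exact ⟨Or.inl h1, by rw [hs1]; linear_combination -h⟩
  · by_cases h2 : tail e = v' ∧ head e = v
    · have htne : tail e ≠ v := h2.1 ▸ hvv'.symm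
      have hmu : ((fun x => ptwist tail head n v' v x)^[b] w').mu e = w'.mu e + b := by
        rw [ptwist_iter_mu, if_pos h2]
      have hs1 : sigmaMu tail n ((fun x => ptwist tail head n v' v x)^[b] w') v e =
          -(w'.mu e + b) := by rw [sigmaMu, if_neg htne, hmu]
      have hs2 : sigmaMu tail n w' v' e = w'.mu e := by rw [sigmaMu, if_pos h2.1]
      constructor
      · rintro ⟨-, h⟩
        rw [hs1] at h
        exact ⟨Or.inl h2, by rw [hs2]; linear_combination -h⟩
      · rintro ⟨-, h⟩
        rw [hs2] at h
        exact ⟨Or.inr h2, by rw [hs1]; linear_combination -h⟩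
    · constructor
      · rintro ⟨h | h, -⟩ <;> [exact absurd h h1; exact absurd h h2]
      · rintro ⟨h | h, -⟩ <;> [exact absurd h h2; exact absurd h h1]

/-- for a tight tuple `(w_v)` on a multitree, with `w_v` obtained from
`w_{v'}` by `b` twists at `(e, v')`, the increments of the twisting divisor sequences
at the two ends of `e` correspond: `D_{i+1}^{e,v} - D_i^{e,v}` is supported on the same
set of edges over `e` as `D_{b-i+1}^{e,v'} - D_{b-i}^{e,v'}`; in particular the degrees
of the increments agree, and `j` is critical for `D_•^{e,v}` iff `b - j` is critical for
`D_•^{e,v'}`. -/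
theorem twisting_divisor_symmetry (tail head : E → V)
    (hloopless : ∀ e, tail e ≠ head e) (n : E → ℕ) (hn : ∀ e, 0 < n e)
    (htree : (collapse tail head).IsTree)
    (w : V → AdmDeg V E n)
    (hconc : ∀ u, Concentrated tail head n (w u) u)
    (htight : ∀ a b : V,
      (∃ e, (tail e = a ∧ head e = b) ∨ (tail e = b ∧ head e = a)) →
      ∃ k : ℕ, w a = (fun x => ptwist tail head n b a x)^[k] (w b))
    (v v' : V) (hadj : ∃ e, (tail e = v ∧ head e = v') ∨ (tail e = v' ∧ head e = v))
    (b : ℕ) (hb : w v = (fun x => ptwist tail head n v' v x)^[b] (w v')) :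
    ∀ i : ℕ, i ≤ b →
      (∀ e : E,
        Dseq tail head n (w v) v v' (i + 1) e - Dseq tail head n (w v) v v' i e =
          Dseq tail head n (w v') v' v (b - i + 1) e -
            Dseq tail head n (w v') v' v (b - i) e) ∧
      (∑ e : E, (Dseq tail head n (w v) v v' (i + 1) e -
          Dseq tail head n (w v) v v' i e) =
        ∑ e : E, (Dseq tail head n (w v') v' v (b - i + 1) e -
          Dseq tail head n (w v') v' v (b - i) e)) ∧
      ((∃ e, Dseq tail head n (w v) v v' (i + 1) e ≠ Dseq tail head n (w v) v v' i e) ↔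
        (∃ e, Dseq tail head n (w v') v' v (b - i + 1) e ≠
          Dseq tail head n (w v') v' v (b - i) e)) := by
  obtain ⟨e0, he0⟩ := hadj
  have hvv' : v ≠ v' := by
    rcases he0 with ⟨ht, hh⟩ | ⟨ht, hh⟩
    · exact fun h => hloopless e0 (ht.trans (h.trans hh.symm))
    · exact fun h => hloopless e0 (ht.trans (h.symm.trans hh.symm))
  intro i hi
  have hmain : ∀ e : E,
      Dseq tail head n (w v) v v' (i + 1) e - Dseq tail head n (w v) v v' i e =
        Dseq tail head n (w v') v' v (b - i + 1) e -
          Dseq tail head n (w v') v' v (b - i) e := by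
    intro e
    show (Dseq tail head n (w v) v v' i e + _) - Dseq tail head n (w v) v v' i e =
      (Dseq tail head n (w v') v' v (b - i) e + _) -
        Dseq tail head n (w v') v' v (b - i) e
    rw [Nat.add_sub_cancel_left, Nat.add_sub_cancel_left]
    exact if_congr (by rw [hb]; exact key_iff tail head n v v' hvv' (w v') b i hi e)
      rfl rfl
  have hle1 : ∀ e : E, Dseq tail head n (w v) v v' i e ≤
      Dseq tail head n (w v) v v' (i + 1) e := fun e => Nat.le_add_right _ _
  have hle2 : ∀ e : E, Dseq tail head n (w v') v' v (b - i) e ≤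
      Dseq tail head n (w v') v' v (b - i + 1) e := fun e => Nat.le_add_right _ _
  refine ⟨hmain, Finset.sum_congr rfl fun e _ => hmain e, ?_⟩
  constructor
  · rintro ⟨e, he⟩
    refine ⟨e, fun h => he ?_⟩
    have h1 := hmain e
    have h2 := hle1 e
    have h3 := hle2 e
    omega
  · rintro ⟨e, he⟩
    refine ⟨e, fun h => he ?_⟩
    have h1 := hmain e
    have h2 := hle1 e
    have h3 := hle2 e
    omega
end

section
/- Let Γ be a metric graph whose underlying model has vertex set V(G) with Ḡ (the collapse of parallel edges) a tree. Let h be a piecewise linear function on Γ with integer slopes such that the divisor D' := D + div(-h) + r·v_0 is effective away from v_0 and v_0-reduced for some divisor D ≥ 0 and integer r ≥ 0. If there were an edge ẽ_0 of G incident to a vertex v_0 with outgoing slope slp_{ẽ_0, v_0}(h) > 0, then by Dhar's burning algorithm there is an infinite sequence of distinct vertices v_0, v_1, v_2, ... of Ḡ and edges e_1, e_2, ... of Ḡ with e_i incident to v_{i-1} and v_i, contradicting that Ḡ is a finite tree. Hence slp_{e, v_0}(h) ≤ 0 for all edges e incident to v_0. -/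
open Finset

variable {V E : Type*} [Fintype V] [Fintype E] [DecidableEq V] [DecidableEq E]

/-- The points of the metric graph `Γ` with vertex set `V`, edge set `E` and
edge lengths `len`: vertices, together with interior points `(e, t)` with
`0 < t < len e` (position measured from the tail of `e`). -/
def MPoint (V E : Type*) (len : E → ℝ) : Type _ :=
  V ⊕ {p : E × ℝ // 0 < p.2 ∧ p.2 < len p.1}

/-- The function on `[0, len e]` obtained by restricting `f : Γ → ℝ` to the edge `e`. -/
noncomputable def edgeFun (tail head : E → V) (len : E → ℝ) (f : MPoint V E len → ℝ) (e : E) :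
    ℝ → ℝ := fun t =>
  if h : 0 < t ∧ t < len e then f (Sum.inr ⟨(e, t), h⟩)
  else if t ≤ 0 then f (Sum.inl (tail e)) else f (Sum.inl (head e))

/-- `g` is piecewise linear with integer slopes on `[a, b]`. -/
def IsPLOn (g : ℝ → ℝ) (a b : ℝ) : Prop :=
  ∃ (k : ℕ) (t : Fin (k + 1) → ℝ) (s : Fin k → ℤ),
    Monotone t ∧ t 0 = a ∧ t (Fin.last k) = b ∧
    ∀ i : Fin k, ∀ x ∈ Set.Icc (t i.castSucc) (t i.succ),
      g x = g (t i.castSucc) + (s i : ℝ) * (x - t i.castSucc)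

/-- `f : Γ → ℝ` is a rational function on `Γ`: piecewise linear with integer slopes
along every edge. -/
def IsPL (tail head : E → V) (len : E → ℝ) (f : MPoint V E len → ℝ) : Prop :=
  ∀ e, IsPLOn (edgeFun tail head len f e) 0 (len e)

/-- `ord_p(f)`: the sum of the outgoing slopes of `f` at the point `p` of `Γ`. -/
noncomputable def ordAt (tail head : E → V) (len : E → ℝ) (f : MPoint V E len → ℝ) :
    MPoint V E len → ℝ
  | Sum.inr q =>
      derivWithin (edgeFun tail head len f q.1.1) (Set.Ici q.1.2) q.1.2
        - derivWithin (edgeFun tail head len f q.1.1) (Set.Iic q.1.2) q.1.2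
  | Sum.inl v => ∑ e : E,
      ((if tail e = v then derivWithin (edgeFun tail head len f e) (Set.Ici (0 : ℝ)) 0 else 0)
        - (if head e = v then derivWithin (edgeFun tail head len f e) (Set.Iic (len e)) (len e)
            else 0))

/-- Linear equivalence of divisors on `Γ`: `D' = D + div(f)` for a rational function `f`. -/
def LinEquiv (tail head : E → V) (len : E → ℝ) (D D' : MPoint V E len →₀ ℤ) : Prop :=
  ∃ f, IsPL tail head len f ∧
    ∀ p, (D' p : ℝ) = (D p : ℝ) + ordAt tail head len f p

/-- The degree of a divisor on `Γ`. -/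
def degD {len : E → ℝ} (D : MPoint V E len →₀ ℤ) : ℤ := D.sum fun _ c => c

/-- A divisor is effective if all its coefficients are nonnegative. -/
def Effective {len : E → ℝ} (D : MPoint V E len →₀ ℤ) : Prop := ∀ p, 0 ≤ D p

/-- The rank of `D` is at least `r`. -/
def RankGe (tail head : E → V) (len : E → ℝ) (D : MPoint V E len →₀ ℤ) (r : ℕ) : Prop :=
  ∀ En : MPoint V E len →₀ ℤ, Effective En → degD En = (r : ℤ) →
    ∃ D', Effective D' ∧ LinEquiv tail head len (D - En) D'

/-- The (Baker–Norine) rank of a divisor on `Γ`. -/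
noncomputable def rank (tail head : E → V) (len : E → ℝ) (D : MPoint V E len →₀ ℤ) : ℤ :=
  sSup {z : ℤ | z = -1 ∨ ∃ r : ℕ, z = (r : ℤ) ∧ RankGe tail head len D r}

/-- The valence of a vertex of `Γ`. -/
def valence (tail head : E → V) (v : V) : ℕ :=
  (univ.filter fun e => tail e = v).card + (univ.filter fun e => head e = v).card

/-- The canonical divisor `K_Γ = Σ_x (val(x) - 2)·x` of `Γ`. -/
noncomputable def canonical (tail head : E → V) (len : E → ℝ) : MPoint V E len →₀ ℤ :=
  ∑ v : V, Finsupp.single (Sum.inl v) ((valence tail head v : ℤ) - 2)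

/-- Connectedness of `Γ`. -/
def MGConnected (tail head : E → V) : Prop :=
  ∀ u u' : V, Relation.ReflTransGen
    (fun a b => ∃ e, (tail e = a ∧ head e = b) ∨ (tail e = b ∧ head e = a)) u u'

/-- The genus (first Betti number) of the connected metric graph `Γ`. -/
def genus (V E : Type*) [Fintype V] [Fintype E] : ℤ :=
  (Fintype.card E : ℤ) - (Fintype.card V : ℤ) + 1

open scoped Classical

/-- A (real-valued) divisor `D` on `Γ` is `q`-reduced: `D` is effective away from
`q`, and for every rational function `f` whose maximum is not attained at `q`
(firing the maximum set of `f` corresponds to a step of Dhar's burning algorithm),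
`D + div(f)` fails to be effective away from `q`. -/
def IsReducedAtR (tail head : E → V) (len : E → ℝ) (D : MPoint V E len → ℝ)
    (q : MPoint V E len) : Prop :=
  (∀ p, p ≠ q → 0 ≤ D p) ∧
  ∀ f, IsPL tail head len f → (∃ p, f q < f p) →
    ∃ p, p ≠ q ∧ D p + ordAt tail head len f p < 0


section Aux

variable (tail head : E → V) (len : E → ℝ)

lemma edgeFun_neg (f : MPoint V E len → ℝ) (e : E) :
    edgeFun tail head len (fun x => -(f x)) e = fun t => -(edgeFun tail head len f e t) := by
  funext t
  unfold edgeFun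
  split_ifs <;> rfl

lemma ordAt_neg (f : MPoint V E len → ℝ) (p : MPoint V E len) :
    ordAt tail head len (fun x => -(f x)) p = - ordAt tail head len f p := by
  cases p with
  | inl v =>
    simp only [ordAt, edgeFun_neg]
    rw [← Finset.sum_neg_distrib]
    refine Finset.sum_congr rfl fun e _ => ?_
    rw [derivWithin.fun_neg,
      derivWithin.fun_neg]
    split_ifs <;> ring
  | inr q =>
    simp only [ordAt, edgeFun_neg]
    rw [derivWithin.fun_neg,
      derivWithin.fun_neg]
    ring

lemma edgeFun_zero (f : MPoint V E len → ℝ) (e : E) :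
    edgeFun tail head len f e 0 = f (Sum.inl (tail e)) := by
  unfold edgeFun
  rw [dif_neg (by simp), if_pos le_rfl]

lemma edgeFun_len (f : MPoint V E len → ℝ) (e : E) (hL : 0 < len e) :
    edgeFun tail head len f e (len e) = f (Sum.inl (head e)) := by
  unfold edgeFun
  rw [dif_neg (by simp), if_neg (not_le.2 hL)]

lemma edgeFun_interior (f : MPoint V E len → ℝ) (e : E) (x : ℝ)
    (hx : 0 < x ∧ x < len e) :
    edgeFun tail head len f e x = f (Sum.inr ⟨(e, x), hx⟩) := by
  unfold edgeFun
  rw [dif_pos hx]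

end Aux

lemma exists_gt_of_pos_right_slope (g : ℝ → ℝ) (L : ℝ) (hL : 0 < L)
    (hPL : IsPLOn g 0 L) (hs : 0 < derivWithin g (Set.Ici (0:ℝ)) 0) :
    ∃ x, 0 < x ∧ x < L ∧ g 0 < g x := by
  obtain ⟨k, t, s, hmono, h0, hlast, hseg⟩ := hPL
  have ht0 : ∀ m, 0 ≤ t m := fun m => h0 ▸ hmono (Fin.zero_le m)
  have htL : ∀ m, t m ≤ L := fun m => hlast ▸ hmono (Fin.le_last m)
  set S : Finset (Fin (k+1)) := Finset.univ.filter (fun m => 0 < t m) with hS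
  have hSne : S.Nonempty := ⟨Fin.last k, by simp [hS, hlast, hL]⟩
  have hmS := S.min'_mem hSne
  have hmpos : 0 < t (S.min' hSne) := by
    simpa [hS] using hmS
  have hmne : S.min' hSne ≠ 0 := by
    intro hz
    rw [hz, h0] at hmpos
    exact lt_irrefl _ hmpos
  obtain ⟨j, hj⟩ := Fin.exists_succ_eq_of_ne_zero hmne
  have hpos : 0 < t j.succ := by rw [hj]; exact hmpos
  have hcz : t j.castSucc = 0 := by
    refine le_antisymm ?_ (ht0 _)
    by_contra hc
    push_neg at hc
    have hmem : j.castSucc ∈ S := by simp [hS, hc]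
    have hle := S.min'_le _ hmem
    rw [← hj] at hle
    exact absurd hle (not_le.2 (Fin.castSucc_lt_succ (i := j)))
  have haff : HasDerivWithinAt g ((s j : ℝ)) (Set.Ici (0:ℝ)) 0 := by
    have hf : HasDerivAt (fun x : ℝ => g 0 + (s j : ℝ) * x) ((s j : ℝ)) 0 := by
      simpa using ((hasDerivAt_id (0:ℝ)).const_mul ((s j : ℝ))).const_add (g 0)
    refine hf.hasDerivWithinAt.congr_of_eventuallyEq ?_ (by simp)
    filter_upwards [nhdsWithin_le_nhds (Iio_mem_nhds hpos), self_mem_nhdsWithin] with x hx hx'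
    have hxm : x ∈ Set.Icc (t j.castSucc) (t j.succ) := by
      rw [hcz]; exact ⟨hx', le_of_lt hx⟩
    rw [hseg j x hxm, hcz]; ring
  have hds : derivWithin g (Set.Ici (0:ℝ)) 0 = (s j : ℝ) :=
    haff.derivWithin (uniqueDiffOn_Ici (0:ℝ) 0 Set.self_mem_Ici)
  rw [hds] at hs
  refine ⟨t j.succ / 2, by linarith, by linarith [htL j.succ], ?_⟩
  have hxm : t j.succ / 2 ∈ Set.Icc (t j.castSucc) (t j.succ) := by
    rw [hcz]; constructor <;> linarith
  rw [hseg j _ hxm, hcz]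
  nlinarith

lemma exists_gt_of_neg_left_slope (g : ℝ → ℝ) (L : ℝ) (hL : 0 < L)
    (hPL : IsPLOn g 0 L) (hs : derivWithin g (Set.Iic L) L < 0) :
    ∃ x, 0 < x ∧ x < L ∧ g L < g x := by
  obtain ⟨k, t, s, hmono, h0, hlast, hseg⟩ := hPL
  have ht0 : ∀ m, 0 ≤ t m := fun m => h0 ▸ hmono (Fin.zero_le m)
  have htL : ∀ m, t m ≤ L := fun m => hlast ▸ hmono (Fin.le_last m)
  set S : Finset (Fin (k+1)) := Finset.univ.filter (fun m => t m < L) with hS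
  have hSne : S.Nonempty := ⟨0, by simp [hS, h0, hL]⟩
  have hmS := S.max'_mem hSne
  have hmlt : t (S.max' hSne) < L := by
    simpa [hS] using hmS
  have hmne : S.max' hSne ≠ Fin.last k := by
    intro hz
    rw [hz, hlast] at hmlt
    exact lt_irrefl _ hmlt
  obtain ⟨j, hj⟩ := Fin.exists_castSucc_eq.2 hmne
  have ha : t j.castSucc < L := by rw [hj]; exact hmlt
  have ha0 : 0 ≤ t j.castSucc := ht0 _
  have hjL : t j.succ = L := by
    refine le_antisymm (htL _) ?_
    by_contra hc
    push_neg at hc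
    have hmem : j.succ ∈ S := by simp [hS, hc]
    have hle := S.le_max' _ hmem
    rw [← hj] at hle
    exact absurd hle (not_le.2 (Fin.castSucc_lt_succ (i := j)))
  have hLm : L ∈ Set.Icc (t j.castSucc) (t j.succ) := by
    rw [hjL]; exact ⟨le_of_lt ha, le_rfl⟩
  have haff : HasDerivWithinAt g ((s j : ℝ)) (Set.Iic L) L := by
    have hf : HasDerivAt
        (fun x : ℝ => g (t j.castSucc) + (s j : ℝ) * (x - t j.castSucc)) ((s j : ℝ)) L := by
      have h1 : HasDerivAt (fun x : ℝ => x - t j.castSucc) 1 L := by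
        simpa using (hasDerivAt_id L).sub_const (t j.castSucc)
      simpa using (h1.const_mul ((s j : ℝ))).const_add (g (t j.castSucc))
    refine hf.hasDerivWithinAt.congr_of_eventuallyEq ?_ (hseg j L hLm)
    filter_upwards [nhdsWithin_le_nhds (Ioi_mem_nhds ha), self_mem_nhdsWithin] with x hx hx'
    have hxm : x ∈ Set.Icc (t j.castSucc) (t j.succ) := by
      rw [hjL]; exact ⟨le_of_lt hx, hx'⟩
    exact hseg j x hxm
  have hds : derivWithin g (Set.Iic L) L = (s j : ℝ) :=
    haff.derivWithin (uniqueDiffOn_Iic L L Set.self_mem_Iic)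
  rw [hds] at hs
  refine ⟨(t j.castSucc + L) / 2, by linarith, by linarith, ?_⟩
  have hxm : (t j.castSucc + L) / 2 ∈ Set.Icc (t j.castSucc) (t j.succ) := by
    rw [hjL]; constructor <;> linarith
  rw [hseg j _ hxm, hseg j L hLm]
  nlinarith

/-- let `Γ` be a metric graph whose collapsed model `Ḡ` is a tree, `h`
a piecewise linear function on `Γ` with integer slopes, `D ≥ 0` a divisor and `r ≥ 0`
such that `D' = D + div(-h) + r·v₀` is `v₀`-reduced.  Then `h` has no strictly
positive outgoing slope at `v₀`: for every edge `e` incident to `v₀`, the outgoing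
slope of `h` at `v₀` along `e` is `≤ 0`. -/
theorem no_positive_outgoing_slope (tail head : E → V) (len : E → ℝ)
    (hlen : ∀ e, 0 < len e) (htree : (collapse tail head).IsTree)
    (h : MPoint V E len → ℝ) (hPL : IsPL tail head len h)
    (D : MPoint V E len → ℤ) (hD : ∀ p, 0 ≤ D p) (r : ℕ) (v0 : V)
    (hred : IsReducedAtR tail head len
      (fun p => (D p : ℝ) + ordAt tail head len (fun x => -(h x)) p +
        (if p = Sum.inl v0 then (r : ℝ) else 0))
      (Sum.inl v0)) :
    ∀ e : E,
      (tail e = v0 → derivWithin (edgeFun tail head len h e) (Set.Ici (0 : ℝ)) 0 ≤ 0) ∧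
      (head e = v0 → 0 ≤ derivWithin (edgeFun tail head len h e) (Set.Iic (len e)) (len e))  := by
  have key : ∀ p : MPoint V E len, ¬ (h (Sum.inl v0) < h p) := by
    intro p hp
    obtain ⟨p', hne, hlt⟩ := hred.2 h hPL ⟨p, hp⟩
    simp only [ordAt_neg, if_neg hne] at hlt
    have hd0 : (0:ℝ) ≤ (D p' : ℝ) := by exact_mod_cast hD p'
    linarith
  intro e
  constructor
  · intro htail
    by_contra hpos
    push_neg at hpos
    obtain ⟨x, hx0, hxL, hgt⟩ := exists_gt_of_pos_right_slope _ _ (hlen e) (hPL e) hpos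
    rw [edgeFun_zero, edgeFun_interior tail head len h e x ⟨hx0, hxL⟩, htail] at hgt
    exact key _ hgt
  · intro hhead
    by_contra hpos
    push_neg at hpos
    obtain ⟨x, hx0, hxL, hgt⟩ := exists_gt_of_neg_left_slope _ _ (hlen e) (hPL e) hpos
    rw [edgeFun_len tail head len h e (hlen e),
      edgeFun_interior tail head len h e x ⟨hx0, hxL⟩, hhead] at hgt
    exact key _ hgt
end
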